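/- Let p be a prime, n ≥ 1, and let j ≥ 1 be an integer such that every finite subgroup of GL_n(ℤ_p) contains an abelian normal subgroup whose index divides j. Then every subgroup 𝒢 of GL_n(𝔽_p) whose order is coprime to p contains an abelian normal subgroup 𝒩 whose index [𝒢 : 𝒩] divides j. (Jordan's theorem for subgroups of GL_n(𝔽_p) of order prime to p.) -/

import Mathlib

set_option linter.unusedSectionVars false
set_option synthInstance.maxHeartbeats 400000

section JordanAux

variable (p : ℕ) [Fact p.Prime]

lemma zmod_isUnit_of_cast {a b : ℕ} (hb : b ≠ 0) (h : b ≤ a) (x : ZMod (p ^ a))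
    (hx : IsUnit (ZMod.castHom (pow_dvd_pow p h) (ZMod (p ^ b)) x)) : IsUnit x := by
  haveI : NeZero (p ^ a) := ⟨pow_ne_zero _ (Fact.out : p.Prime).ne_zero⟩
  haveI : NeZero (p ^ b) := ⟨pow_ne_zero _ (Fact.out : p.Prime).ne_zero⟩
  rw [← ZMod.natCast_rightInverse x, map_natCast] at hx
  rw [← ZMod.natCast_rightInverse x]
  rw [ZMod.isUnit_iff_coprime] at hx ⊢
  rw [Nat.coprime_pow_right_iff (Nat.pos_of_ne_zero hb)] at hx
  rw [Nat.coprime_pow_right_iff (lt_of_lt_of_le (Nat.pos_of_ne_zero hb) h)]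
  exact hx

def glRed (n : ℕ) {a b : ℕ} (h : b ≤ a) :
    GL (Fin n) (ZMod (p ^ a)) →* GL (Fin n) (ZMod (p ^ b)) :=
  Matrix.GeneralLinearGroup.map (ZMod.castHom (pow_dvd_pow p h) _)

def glRed1 (n : ℕ) {a : ℕ} (ha : a ≠ 0) :
    GL (Fin n) (ZMod (p ^ a)) →* GL (Fin n) (ZMod p) :=
  Matrix.GeneralLinearGroup.map (ZMod.castHom (dvd_pow_self p ha) _)

lemma glRed1_comp_glRed (n : ℕ) {a b : ℕ} (hb : b ≠ 0) (h : b ≤ a) :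
    (glRed1 p n hb).comp (glRed p n h) = glRed1 p n (fun h0 => hb (Nat.le_zero.mp (h0 ▸ h))) := by
  rw [glRed1, glRed, ← Matrix.GeneralLinearGroup.map_comp, ZMod.castHom_comp]
  rfl

lemma glRed_surjective (n : ℕ) {a b : ℕ} (hb : b ≠ 0) (h : b ≤ a) :
    Function.Surjective (glRed p n h) := by
  haveI : NeZero (p ^ b) := ⟨pow_ne_zero _ (Fact.out : p.Prime).ne_zero⟩
  intro u
  set f := ZMod.castHom (pow_dvd_pow p h) (ZMod (p ^ b)) with hf
  set M : Matrix (Fin n) (Fin n) (ZMod (p ^ a)) :=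
    Matrix.of (fun i j => (((u : Matrix (Fin n) (Fin n) (ZMod (p ^ b))) i j).val : ZMod (p ^ a)))
    with hM
  have hMu : M.map f = u := by
    ext i j
    simp [hM, Matrix.map_apply, map_natCast, ZMod.natCast_rightInverse _]
  have hdet : IsUnit M.det := by
    apply zmod_isUnit_of_cast p hb h
    rw [RingHom.map_det f M, RingHom.mapMatrix_apply, hMu]
    exact (Matrix.isUnit_iff_isUnit_det _).mp u.isUnit
  refine ⟨Matrix.GeneralLinearGroup.mk'' M hdet, ?_⟩
  apply Units.ext
  show (RingHom.mapMatrix f) ((Matrix.GeneralLinearGroup.mk'' M hdet : GL (Fin n) (ZMod (p^a))) :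
    Matrix (Fin n) (Fin n) (ZMod (p^a))) = (u : Matrix (Fin n) (Fin n) (ZMod (p^b)))
  rw [RingHom.mapMatrix_apply]
  have : ((Matrix.GeneralLinearGroup.mk'' M hdet : GL (Fin n) (ZMod (p^a))) :
      Matrix (Fin n) (Fin n) (ZMod (p^a))) = M := rfl
  rw [this, hMu]

variable (n : ℕ) (𝒢 : Subgroup (GL (Fin n) (ZMod p)))

/-- partial lifts of `𝒢` to level `p^(k+1)`. -/
def LiftHom (k : ℕ) : Type :=
  {s : 𝒢 →* GL (Fin n) (ZMod (p ^ (k + 1))) //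
    (glRed1 p n (Nat.succ_ne_zero k)).comp s = 𝒢.subtype}

lemma liftHom_finite (k : ℕ) : Finite (LiftHom p n 𝒢 k) := by
  haveI : NeZero p := ⟨(Fact.out : p.Prime).ne_zero⟩
  haveI : NeZero (p ^ (k+1)) := ⟨pow_ne_zero _ (Fact.out : p.Prime).ne_zero⟩
  haveI : Finite (𝒢 →* GL (Fin n) (ZMod (p ^ (k+1)))) :=
    Finite.of_injective _ (DFunLike.coe_injective (F := 𝒢 →* GL (Fin n) (ZMod (p ^ (k+1)))))
  exact Subtype.finite

lemma liftHom_zero : Nonempty (LiftHom p n 𝒢 0) := by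
  haveI : NeZero p := ⟨(Fact.out : p.Prime).ne_zero⟩
  refine ⟨⟨(Matrix.GeneralLinearGroup.map (ZMod.ringEquivCongr (pow_one p).symm).toRingHom).comp
    𝒢.subtype, ?_⟩⟩
  rw [← MonoidHom.comp_assoc, glRed1, ← Matrix.GeneralLinearGroup.map_comp]
  have : (ZMod.castHom (dvd_pow_self p (Nat.succ_ne_zero 0)) (ZMod p)).comp
      (ZMod.ringEquivCongr (pow_one p).symm).toRingHom = RingHom.id (ZMod p) := by
    ext x
    obtain ⟨m, rfl⟩ := ZMod.natCast_zmod_surjective x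
    simp [map_natCast]
  rw [this, Matrix.GeneralLinearGroup.map_id, MonoidHom.id_comp]

lemma glRed_ker_pow_p {n a : ℕ} (ha : a ≠ 0) (u : GL (Fin n) (ZMod (p ^ (a + 1))))
    (hu : glRed p n (Nat.le_succ a) u = 1) : u ^ p = 1 := by
  haveI : NeZero (p ^ (a+1)) := ⟨pow_ne_zero _ (Fact.out : p.Prime).ne_zero⟩
  haveI : NeZero (p ^ a) := ⟨pow_ne_zero _ (Fact.out : p.Prime).ne_zero⟩
  set R := ZMod (p ^ (a+1))
  set f := ZMod.castHom (pow_dvd_pow p (Nat.le_succ a)) (ZMod (p ^ a)) with hf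
  set A : Matrix (Fin n) (Fin n) R := (u : Matrix (Fin n) (Fin n) R) - 1 with hAdef
  have hfA : ∀ i j, f (A i j) = 0 := by
    intro i j
    have h1 : ((glRed p n (Nat.le_succ a) u : GL (Fin n) (ZMod (p^a))) :
        Matrix (Fin n) (Fin n) (ZMod (p^a))) = (1 : Matrix (Fin n) (Fin n) (ZMod (p^a))) := by
      rw [hu]; rfl
    have h2 : ((u : Matrix (Fin n) (Fin n) R).map f) i j =
        (1 : Matrix (Fin n) (Fin n) (ZMod (p^a))) i j := by
      rw [← h1]; rfl
    rw [Matrix.map_apply] at h2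
    have : f (A i j) = f ((u : Matrix (Fin n) (Fin n) R) i j) - f ((1 : Matrix (Fin n) (Fin n) R) i j) := by
      rw [hAdef, Matrix.sub_apply, map_sub]
    rw [this, h2]
    have : f ((1 : Matrix (Fin n) (Fin n) R) i j) = (1 : Matrix (Fin n) (Fin n) (ZMod (p^a))) i j := by
      by_cases hij : i = j
      · subst hij; rw [Matrix.one_apply_eq, Matrix.one_apply_eq, map_one]
      · rw [Matrix.one_apply_ne hij, Matrix.one_apply_ne hij, map_zero]
    rw [this, sub_self]
  have hA : ∀ i j, ∃ y : R, A i j = (p : R) ^ a * y := by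
    intro i j
    have h0 := hfA i j
    rw [← ZMod.natCast_rightInverse (A i j), map_natCast,
      ZMod.natCast_eq_zero_iff] at h0
    obtain ⟨c, hc⟩ := h0
    refine ⟨(c : R), ?_⟩
    rw [← ZMod.natCast_rightInverse (A i j)]
    rw [hc]
    push_cast
    ring
  have hpow : (p : R) ^ (a + 1) = 0 := by
    rw [← Nat.cast_pow, ZMod.natCast_self]
  have hA2 : A * A = 0 := by
    ext i j
    rw [Matrix.mul_apply, Matrix.zero_apply]
    apply Finset.sum_eq_zero
    intro l _
    obtain ⟨y, hy⟩ := hA i l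
    obtain ⟨z, hz⟩ := hA l j
    rw [hy, hz]
    have e : (p:R)^(a+1)*(p:R)^(a-1) = (p:R)^a*(p:R)^a := by
      rw [← pow_add, ← pow_add]
      congr 1
      omega
    have h2a : (p : R) ^ a * y * ((p : R) ^ a * z) = (p : R)^(a+1) * ((p:R)^(a-1) * (y * z)) := by
      calc (p : R) ^ a * y * ((p : R) ^ a * z) = ((p:R)^a*(p:R)^a) * (y*z) := by ring
        _ = ((p:R)^(a+1)*(p:R)^(a-1)) * (y*z) := by rw [e]
        _ = (p : R)^(a+1) * ((p:R)^(a-1) * (y * z)) := by ring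
    rw [h2a, hpow, zero_mul]
  have hpA : ∀ i j, (p : R) * A i j = 0 := by
    intro i j
    obtain ⟨y, hy⟩ := hA i j
    rw [hy, ← mul_assoc, ← pow_succ', hpow]
    · rw [zero_mul]
  have hApow : ∀ m, 2 ≤ m → A ^ m = 0 := by
    intro m hm
    obtain ⟨c, rfl⟩ := Nat.exists_eq_add_of_le hm
    rw [pow_add, pow_two, hA2, zero_mul]
  have hp2 : 2 ≤ p := (Fact.out : p.Prime).two_le
  have key : (u : Matrix (Fin n) (Fin n) R) ^ p = 1 := by
    have hu1 : (u : Matrix (Fin n) (Fin n) R) = A + 1 := by rw [hAdef, sub_add_cancel]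
    rw [hu1, Commute.add_pow (Commute.one_right A)]
    have hsplit := Finset.sum_range_add_sum_Ico
      (fun m => A ^ m * 1 ^ (p - m) * (p.choose m : Matrix (Fin n) (Fin n) R))
      (show 2 ≤ p + 1 by omega)
    rw [← hsplit]
    have hIco : ∑ m ∈ Finset.Ico 2 (p+1),
        A ^ m * 1 ^ (p - m) * (p.choose m : Matrix (Fin n) (Fin n) R) = 0 := by
      apply Finset.sum_eq_zero
      intro m hm
      rw [hApow m (Finset.mem_Ico.mp hm).1, zero_mul, zero_mul]
    rw [hIco, add_zero, Finset.sum_range_succ, Finset.sum_range_one]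
    simp only [pow_zero, pow_one, one_mul, Nat.choose_zero_right, Nat.cast_one, mul_one,
      Nat.choose_one_right]
    have : A * (p : Matrix (Fin n) (Fin n) R) = 0 := by
      ext i j
      rw [Matrix.mul_apply, Matrix.zero_apply]
      apply Finset.sum_eq_zero
      intro l _
      by_cases hl : l = j
      · subst hl
        have : (p : Matrix (Fin n) (Fin n) R) l l = (p : R) := by
          rw [← Matrix.diagonal_natCast, Matrix.diagonal_apply_eq]
        rw [this, mul_comm, hpA]
      · have : (p : Matrix (Fin n) (Fin n) R) l j = 0 := by
          rw [← Matrix.diagonal_natCast, Matrix.diagonal_apply_ne _ hl]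
        rw [this, mul_zero]
    rw [one_pow, one_pow, mul_one, this, add_zero]
    simp only [one_mul]
    exact Nat.cast_one
  apply Units.ext
  rw [Units.val_pow_eq_pow_val, key, Units.val_one]

lemma liftHom_step (hcard : Nat.Coprime (Nat.card 𝒢) p) (k : ℕ) (x : LiftHom p n 𝒢 k) :
    Nonempty (LiftHom p n 𝒢 (k + 1)) := by
  haveI : NeZero p := ⟨(Fact.out : p.Prime).ne_zero⟩
  haveI : NeZero (p ^ (k+1)) := ⟨pow_ne_zero _ (Fact.out : p.Prime).ne_zero⟩
  haveI : NeZero (p ^ (k+2)) := ⟨pow_ne_zero _ (Fact.out : p.Prime).ne_zero⟩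
  obtain ⟨s, hs⟩ := x
  set ρ := glRed p n (Nat.le_succ (k+1)) with hρdef
  have hρ : Function.Surjective ρ := glRed_surjective p n (Nat.succ_ne_zero k) (Nat.le_succ (k+1))
  set Q := s.range.comap ρ with hQdef
  set φ := ρ.comp Q.subtype with hφdef
  have hrange : φ.range = s.range := by
    rw [hφdef, MonoidHom.range_comp, Subgroup.range_subtype, hQdef,
      Subgroup.map_comap_eq_self_of_surjective hρ]
  have hkerpow : ∀ g : Q, g ∈ φ.ker → g ^ p = 1 := by
    intro g hg
    have : ((g : GL (Fin n) (ZMod (p ^ (k+2))))) ^ p = 1 := by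
      apply glRed_ker_pow_p p (Nat.succ_ne_zero k)
      exact hg
    apply Subtype.ext
    simpa using this
  have hindex : φ.ker.index = Nat.card s.range := by
    rw [Subgroup.index_ker, hrange]
  have hsdvd : Nat.card s.range ∣ Nat.card 𝒢 := by
    rw [← Subgroup.index_ker]
    exact Subgroup.index_dvd_card _
  have cop : Nat.Coprime (Nat.card φ.ker) φ.ker.index := by
    rw [Nat.Coprime]
    by_contra hd
    set d := Nat.gcd (Nat.card φ.ker) φ.ker.index with hddef
    have hq : d.minFac.Prime := Nat.minFac_prime hd
    haveI : Fact d.minFac.Prime := ⟨hq⟩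
    have hq1 : d.minFac ∣ Nat.card φ.ker := dvd_trans d.minFac_dvd (Nat.gcd_dvd_left _ _)
    obtain ⟨g, hg⟩ := exists_prime_orderOf_dvd_card' d.minFac hq1
    have hgp : (g : Q) ^ p = 1 := hkerpow g g.2
    have : d.minFac ∣ p := by
      rw [← hg]
      apply orderOf_dvd_of_pow_eq_one
      exact Subtype.ext (by simpa using hgp)
    have hdp : d.minFac = p := (Nat.prime_dvd_prime_iff_eq hq Fact.out).mp this
    have hpc : p ∣ Nat.card 𝒢 := by
      have h1 : d.minFac ∣ φ.ker.index := dvd_trans d.minFac_dvd (Nat.gcd_dvd_right _ _)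
      rw [hdp, hindex] at h1
      exact dvd_trans h1 hsdvd
    have : p ∣ 1 := hcard ▸ Nat.dvd_gcd hpc dvd_rfl
    exact Nat.Prime.one_lt Fact.out |>.ne' (Nat.dvd_one.mp this)
  obtain ⟨H, hH⟩ := Subgroup.exists_right_complement'_of_coprime cop
  have hinj : ∀ h₁ h₂ : H, φ (h₁ : Q) = φ (h₂ : Q) → h₁ = h₂ := by
    intro h₁ h₂ he
    have hmem : ((h₁ : Q) * (h₂ : Q)⁻¹) ∈ φ.ker := by
      rw [MonoidHom.mem_ker, map_mul, map_inv, he, mul_inv_cancel]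
    have hmemH : ((h₁ : Q) * (h₂ : Q)⁻¹) ∈ H := H.mul_mem h₁.2 (H.inv_mem h₂.2)
    have h1 : (h₁ : Q) * (h₂ : Q)⁻¹ = 1 := Subgroup.disjoint_def.mp hH.disjoint hmem hmemH
    exact Subtype.ext (mul_inv_eq_one.mp h1)
  have hex : ∀ g : 𝒢, ∃! h : H, φ (h : Q) = s g := by
    intro g
    obtain ⟨u, hu⟩ := hρ (s g)
    have huQ : u ∈ Q := by
      rw [hQdef, Subgroup.mem_comap, hu]
      exact ⟨g, rfl⟩
    obtain ⟨⟨nn, hh⟩, hmul, -⟩ := hH.existsUnique (⟨u, huQ⟩ : Q)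
    have hval : φ (hh : Q) = s g := by
      have h1 : φ ((nn : Q) * (hh : Q)) = φ (nn : Q) * φ (hh : Q) := map_mul _ _ _
      have h2 : φ (nn : Q) = 1 := nn.2
      have h3 : (nn : Q) * (hh : Q) = (⟨u, huQ⟩ : Q) := hmul
      have h4 : φ ((⟨u, huQ⟩ : Q)) = s g := hu
      rw [← h4, ← h3, h1, h2, one_mul]
    exact ⟨hh, hval, fun h' hh' => hinj h' hh (hh'.trans hval.symm)⟩
  let t : 𝒢 → H := fun g => (hex g).exists.choose
  have ht : ∀ g, φ ((t g : Q)) = s g := fun g => (hex g).exists.choose_spec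
  have hun : ∀ (g : 𝒢) (h : H), φ (h : Q) = s g → h = t g :=
    fun g h hh => (hex g).unique hh (ht g)
  refine ⟨⟨MonoidHom.mk' (fun g => ((t g : Q) : GL (Fin n) (ZMod (p ^ (k + 2))))) ?_, ?_⟩⟩
  · intro g₁ g₂
    have h1 : t g₁ * t g₂ = t (g₁ * g₂) := by
      apply hun
      push_cast
      rw [map_mul, ht g₁, ht g₂, map_mul]
    show ((t (g₁ * g₂) : Q) : GL (Fin n) (ZMod (p ^ (k + 2)))) = _
    rw [← h1]
    push_cast
    rfl
  · apply MonoidHom.ext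
    intro g
    have h2 : ρ ((t g : Q) : GL (Fin n) (ZMod (p ^ (k + 2)))) = s g := ht g
    have h3 : glRed1 p n (Nat.succ_ne_zero (k + 1)) ((t g : Q) : GL (Fin n) (ZMod (p ^ (k + 2)))) =
        glRed1 p n (Nat.succ_ne_zero k) (ρ ((t g : Q) : GL (Fin n) (ZMod (p ^ (k + 2))))) :=
      (DFunLike.congr_fun (glRed1_comp_glRed p n (Nat.succ_ne_zero k) (Nat.le_succ (k+1))) _).symm
    show glRed1 p n (Nat.succ_ne_zero (k + 1)) ((t g : Q) : GL (Fin n) (ZMod (p ^ (k + 2)))) = _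
    rw [h3, h2]
    exact DFunLike.congr_fun hs g

/-- The subring of compatible sequences in `Π k, ZMod (p^k)`. -/
def CompatSeq : Subring (Π k, ZMod (p ^ k)) where
  carrier := {x | ∀ k, ZMod.castHom (pow_dvd_pow p (Nat.le_succ k)) (ZMod (p ^ k)) (x (k + 1)) = x k}
  mul_mem' hx hy := fun k => by simp [map_mul, hx k, hy k]
  add_mem' hx hy := fun k => by simp [map_add, hx _, hy _]
  one_mem' := fun k => by show (ZMod.castHom _ _) (1:ZMod (p^(k+1))) = 1; rw [map_one]
  zero_mem' := fun k => by simp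
  neg_mem' hx := fun k => by show (ZMod.castHom _ _) (-_) = _; rw [map_neg, hx k]; rfl

lemma CompatSeq.pair {x : Π k, ZMod (p ^ k)} (hx : x ∈ CompatSeq p) :
    ∀ k2 k1 (h : k1 ≤ k2), ZMod.castHom (pow_dvd_pow p h) (ZMod (p ^ k1)) (x k2) = x k1 := by
  intro k2
  induction k2 with
  | zero => intro k1 h; obtain rfl : k1 = 0 := Nat.le_zero.mp h; exact @Subsingleton.elim _ (by rw [pow_zero]; infer_instance) _ _
  | succ k ih =>
    intro k1 h
    rcases Nat.lt_or_ge k1 (k+1) with h' | h'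
    · have h1 : k1 ≤ k := Nat.lt_succ_iff.mp h'
      have : (ZMod.castHom (pow_dvd_pow p h1) (ZMod (p ^ k1))).comp
          (ZMod.castHom (pow_dvd_pow p (Nat.le_succ k)) (ZMod (p ^ k))) =
          ZMod.castHom (pow_dvd_pow p h) (ZMod (p ^ k1)) :=
        ZMod.castHom_comp _ _
      rw [← this, RingHom.comp_apply, hx k, ih k1 h1]
    · obtain rfl : k1 = k + 1 := le_antisymm h h'
      simp
noncomputable def CompatSeq.lift : CompatSeq p →+* ℤ_[p] :=
  PadicInt.lift (f := fun k => (Pi.evalRingHom _ k).comp (CompatSeq p).subtype)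
    (by intro k1 k2 h
        ext ⟨x, hx⟩
        exact CompatSeq.pair p hx k2 k1 h)

lemma CompatSeq.lift_spec (x : CompatSeq p) (k : ℕ) :
    PadicInt.toZModPow k (CompatSeq.lift p x) = x.1 k := by
  have := PadicInt.lift_spec (f := fun k => (Pi.evalRingHom _ k).comp (CompatSeq p).subtype)
    (by intro k1 k2 h
        ext ⟨x, hx⟩
        exact CompatSeq.pair p hx k2 k1 h) k
  exact congrFun (congrArg (fun f => f.toFun) this) x

open CategoryTheory in
/-- König-style inverse limit for a sequence of nonempty finite types. -/
lemma seq_inverse_limit {X : ℕ → Type} [∀ k, Finite (X k)] [∀ k, Nonempty (X k)]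
    (f : ∀ k, X (k + 1) → X k) :
    ∃ x : ∀ k, X k, ∀ k, f k (x (k + 1)) = x k := by
  let F : ℕᵒᵖ ⥤ Type := Functor.ofOpSequence (C := Type) (fun k => (TypeCat.ofHom (f k) : X (k+1) ⟶ X k))
  haveI : ∀ j : ℕᵒᵖ, Finite (F.obj j) := fun j => inferInstanceAs (Finite (X j.unop))
  haveI : ∀ j : ℕᵒᵖ, Nonempty (F.obj j) := fun j => inferInstanceAs (Nonempty (X j.unop))
  obtain ⟨s, hs⟩ := nonempty_sections_of_finite_inverse_system F
  refine ⟨fun k => s (Opposite.op k), fun k => ?_⟩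
  have := hs (f := (homOfLE (Nat.le_add_right k 1)).op)
  rw [Functor.ofOpSequence_map_homOfLE_succ] at this
  exact this


/-- restriction map between lift levels -/
def liftHomRes (k : ℕ) : LiftHom p n 𝒢 (k + 1) → LiftHom p n 𝒢 k := fun s =>
  ⟨(glRed p n (Nat.le_succ (k + 1))).comp s.1, by
    rw [← MonoidHom.comp_assoc, glRed1_comp_glRed p n (Nat.succ_ne_zero k) (Nat.le_succ (k + 1))]
    exact s.2⟩

end JordanAux

/-- Jordan's theorem for subgroups of `GL_n(𝔽_p)` of order prime to `p`:
if `j ≥ 1` is such that every finite subgroup of `GL_n(ℤ_p)` contains an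
abelian normal subgroup of index dividing `j`, then every subgroup of
`GL_n(𝔽_p)` of order coprime to `p` contains an abelian normal subgroup of
index dividing `j`. -/
theorem jordan_theorem_mod_p (p : ℕ) [Fact p.Prime] (n : ℕ) (hn : 1 ≤ n)
    (j : ℕ) (hj : 1 ≤ j)
    (hJordan : ∀ G : Subgroup (GL (Fin n) ℤ_[p]), Finite G →
      ∃ N : Subgroup G, N.Normal ∧ (∀ a ∈ N, ∀ b ∈ N, a * b = b * a) ∧
        N.index ∣ j)
    (𝒢 : Subgroup (GL (Fin n) (ZMod p)))
    (hcard : Nat.Coprime (Nat.card 𝒢) p) :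
    ∃ 𝒩 : Subgroup 𝒢, 𝒩.Normal ∧ (∀ a ∈ 𝒩, ∀ b ∈ 𝒩, a * b = b * a) ∧
      𝒩.index ∣ j := by
  haveI : NeZero p := ⟨(Fact.out : p.Prime).ne_zero⟩
  haveI hsub0 : Subsingleton (ZMod (p ^ 0)) := by rw [pow_zero]; infer_instance
  haveI : ∀ k, Finite (LiftHom p n 𝒢 k) := liftHom_finite p n 𝒢
  haveI : ∀ k, Nonempty (LiftHom p n 𝒢 k) := by
    intro k
    induction k with
    | zero => exact liftHom_zero p n 𝒢
    | succ k ih => exact liftHom_step p n 𝒢 hcard k ih.some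
  obtain ⟨x, hx⟩ := seq_inverse_limit (X := fun k => LiftHom p n 𝒢 k) (liftHomRes p n 𝒢)
  -- entrywise compatible sequences
  set eseq : 𝒢 → Fin n → Fin n → (∀ m, ZMod (p ^ m)) := fun g i j m =>
    Nat.casesOn m 0 (fun k =>
      (((x k).1 g : GL (Fin n) (ZMod (p ^ (k + 1)))) :
        Matrix (Fin n) (Fin n) (ZMod (p ^ (k + 1)))) i j) with heseq
  have hmem : ∀ g i j, eseq g i j ∈ CompatSeq p := by
    intro g i j m
    cases m with
    | zero => exact Subsingleton.elim _ _
    | succ k =>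
      have h1 : glRed p n (Nat.le_succ (k + 1)) ((x (k + 1)).1 g) = (x k).1 g :=
        DFunLike.congr_fun (congrArg Subtype.val (hx k)) g
      calc ZMod.castHom (pow_dvd_pow p (Nat.le_succ (k + 1))) (ZMod (p ^ (k + 1)))
            (eseq g i j (k + 2))
          = ((glRed p n (Nat.le_succ (k + 1)) ((x (k + 1)).1 g) :
              GL (Fin n) (ZMod (p ^ (k + 1)))) :
              Matrix (Fin n) (Fin n) (ZMod (p ^ (k + 1)))) i j := rfl
        _ = eseq g i j (k + 1) := by rw [h1]
  set S0 : 𝒢 → Matrix (Fin n) (Fin n) ℤ_[p] := fun g =>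
    Matrix.of (fun i j => CompatSeq.lift p ⟨eseq g i j, hmem g i j⟩) with hS0
  have key : ∀ (g : 𝒢) (i j : Fin n) (k : ℕ),
      PadicInt.toZModPow (k + 1) (S0 g i j) =
        (((x k).1 g : GL (Fin n) (ZMod (p ^ (k + 1)))) :
          Matrix (Fin n) (Fin n) (ZMod (p ^ (k + 1)))) i j := by
    intro g i j k
    exact CompatSeq.lift_spec p ⟨eseq g i j, hmem g i j⟩ (k + 1)
  have hS0mul : ∀ g h : 𝒢, S0 (g * h) = S0 g * S0 h := by
    intro g h
    ext i j
    apply PadicInt.ext_of_toZModPow.mp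
    intro m
    cases m with
    | zero => exact Subsingleton.elim _ _
    | succ k =>
      rw [Matrix.mul_apply, map_sum, key]
      have h1 : ((x k).1 (g * h) : GL (Fin n) (ZMod (p ^ (k + 1)))) =
          ((x k).1 g) * ((x k).1 h) := map_mul _ _ _
      rw [h1, Units.val_mul, Matrix.mul_apply]
      apply Finset.sum_congr rfl
      intro l _
      rw [map_mul, key, key]
  have hS0one : S0 1 = 1 := by
    ext i j
    apply PadicInt.ext_of_toZModPow.mp
    intro m
    cases m with
    | zero => exact Subsingleton.elim _ _
    | succ k =>
      rw [key, map_one, Units.val_one]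
      by_cases hij : i = j
      · subst hij; rw [Matrix.one_apply_eq, Matrix.one_apply_eq, map_one]
      · rw [Matrix.one_apply_ne hij, Matrix.one_apply_ne hij, map_zero]
  set S : 𝒢 →* GL (Fin n) ℤ_[p] := MonoidHom.mk' (fun g =>
    ⟨S0 g, S0 g⁻¹,
      by rw [← hS0mul, mul_inv_cancel, hS0one],
      by rw [← hS0mul, inv_mul_cancel, hS0one]⟩)
    (fun g h => by apply Units.ext; exact hS0mul g h) with hSdef
  set r : GL (Fin n) ℤ_[p] →* GL (Fin n) (ZMod p) :=
    Matrix.GeneralLinearGroup.map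
      ((ZMod.castHom (dvd_pow_self p one_ne_zero) (ZMod p)).comp (PadicInt.toZModPow 1)) with hrdef
  have hred : ∀ g : 𝒢, r (S g) = (g : GL (Fin n) (ZMod p)) := by
    intro g
    have h2 : glRed1 p n (Nat.succ_ne_zero 0) ((x 0).1 g) = (g : GL (Fin n) (ZMod p)) :=
      DFunLike.congr_fun (x 0).2 g
    apply Units.ext
    ext i j
    calc ((r (S g) : GL (Fin n) (ZMod p)) : Matrix (Fin n) (Fin n) (ZMod p)) i j
        = ZMod.castHom (dvd_pow_self p one_ne_zero) (ZMod p)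
            (PadicInt.toZModPow 1 (S0 g i j)) := rfl
      _ = ZMod.castHom (dvd_pow_self p one_ne_zero) (ZMod p)
            ((((x 0).1 g : GL (Fin n) (ZMod (p ^ 1))) :
              Matrix (Fin n) (Fin n) (ZMod (p ^ 1))) i j) := by rw [key]
      _ = ((glRed1 p n (Nat.succ_ne_zero 0) ((x 0).1 g) : GL (Fin n) (ZMod p)) :
            Matrix (Fin n) (Fin n) (ZMod p)) i j := rfl
      _ = ((g : GL (Fin n) (ZMod p)) : Matrix (Fin n) (Fin n) (ZMod p)) i j := by rw [h2]
  -- the finite subgroup of GL_n(Z_p)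
  set F : Subgroup (GL (Fin n) ℤ_[p]) := S.range with hFdef
  haveI hFfin : Finite F := by
    haveI : Finite 𝒢 := Subtype.finite
    apply Finite.of_surjective (fun g : 𝒢 => (⟨S g, ⟨g, rfl⟩⟩ : F))
    rintro ⟨y, g, rfl⟩
    exact ⟨g, rfl⟩
  obtain ⟨N, hNnorm, hNab, hNidx⟩ := hJordan F hFfin
  have hmemT : ∀ a : F, r (F.subtype a) ∈ 𝒢 := by
    rintro ⟨y, g, rfl⟩
    rw [Subgroup.coe_subtype]
    show r (S g) ∈ 𝒢
    rw [hred g]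
    exact g.2
  set T : F →* 𝒢 := (r.comp F.subtype).codRestrict 𝒢 (fun a => hmemT a) with hTdef
  have hTsurj : Function.Surjective T := by
    intro g
    refine ⟨⟨S g, ⟨g, rfl⟩⟩, ?_⟩
    apply Subtype.ext
    show r (S g) = (g : GL (Fin n) (ZMod p))
    exact hred g
  refine ⟨N.map T, hNnorm.map T hTsurj, ?_, dvd_trans (N.index_map_dvd hTsurj) hNidx⟩
  rintro a ha b hb
  rw [Subgroup.mem_map] at ha hb
  obtain ⟨a', ha', rfl⟩ := ha
  obtain ⟨b', hb', rfl⟩ := hb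
  rw [← map_mul, ← map_mul, hNab a' ha' b' hb']
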